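/- If n ≡ 2 (mod 3), then the number of minimum-weight Roman dominating functions on the path P_n equals (n+4)(n+7)/18. -/

import Mathlib

def IsRDF {V : Type*} (G : SimpleGraph V) (f : V → ℕ) : Prop :=
  (∀ v, f v ≤ 2) ∧ ∀ v, f v = 0 → ∃ u, G.Adj v u ∧ f u = 2

noncomputable def gammaR {V : Type*} [Fintype V] (G : SimpleGraph V) : ℕ :=
  sInf {w | ∃ f, IsRDF G f ∧ ∑ v, f v = w}

def IsMinRDF {V : Type*} [Fintype V] (G : SimpleGraph V) (f : V → ℕ) : Prop :=
  IsRDF G f ∧ ∑ v, f v = gammaR G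

noncomputable instance myInstSetFintype {V : Type*} [Fintype V] (s : Set V) : Fintype s :=
  s.toFinite.fintype

namespace RDFAux

inductive St | free | after2 | needy
deriving DecidableEq

def nxt : St → ℕ → Option St
| _, 2 => some .after2
| .needy, _ => none
| _, 1 => some .free
| .after2, 0 => some .free
| .free, 0 => some .needy
| _, _ => none

def step (s : St) (x : ℕ) (F : St → Finset (List ℕ)) : Finset (List ℕ) :=
  match nxt s x with
  | some s' => (F s').image (x :: ·)
  | none => ∅

def VL : ℕ → St → Finset (List ℕ)
| 0 => fun s => if s = .needy then ∅ else {[]}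
| (L+1) => fun s => step s 0 (VL L) ∪ step s 1 (VL L) ∪ step s 2 (VL L)

def mv : St → ℕ → ℕ
| .free, L => 2*(L/3) + L%3
| .after2, L => 2*(L/3) + (if L%3 = 2 then 1 else 0)
| .needy, L => 2*(L/3) + (if L%3 = 0 then 1 else 2)

def tri : ℕ → ℕ
| 0 => 1
| (t+1) => tri t + t + 2

def cv : St → ℕ → ℕ
| .free, L => if L%3 = 0 then 1 else if L%3 = 1 then L/3 + 1 else tri (L/3 + 1)
| .after2, L => if L%3 = 0 then tri (L/3) else if L%3 = 1 then 1 else L/3 + 1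
| .needy, L => if L%3 = 0 then L/3 else if L%3 = 1 then tri (L/3) else 1

lemma nxt_ge3 : ∀ (s : St) (m : ℕ), nxt s (m+3) = none := by
  intro s m; cases s <;> rfl

lemma mem_step {s : St} {x : ℕ} {F : St → Finset (List ℕ)} {l : List ℕ} :
    l ∈ step s x F ↔ ∃ s', nxt s x = some s' ∧ ∃ t ∈ F s', l = x :: t := by
  unfold step
  rcases h : nxt s x with _ | s'
  · simp [h]
  · simp [h, eq_comm]

lemma mem_VL_succ {L : ℕ} {s : St} {l : List ℕ} :
    l ∈ VL (L+1) s ↔ ∃ x s' t, nxt s x = some s' ∧ t ∈ VL L s' ∧ l = x :: t := by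
  show l ∈ _ ∪ _ ∪ _ ↔ _
  simp only [Finset.mem_union, mem_step]
  constructor
  · rintro ((h | h) | h) <;>
    · obtain ⟨s', h1, t, h2, h3⟩ := h
      exact ⟨_, s', t, h1, h2, h3⟩
  · rintro ⟨x, s', t, h1, h2, h3⟩
    have hx : x = 0 ∨ x = 1 ∨ x = 2 := by
      by_contra hc
      push_neg at hc
      obtain ⟨x, rfl⟩ : ∃ y, x = y + 3 := ⟨x - 3, by omega⟩
      rw [nxt_ge3] at h1
      exact absurd h1 (by simp)
    rcases hx with rfl | rfl | rfl
    · exact Or.inl (Or.inl ⟨s', h1, t, h2, h3⟩)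
    · exact Or.inl (Or.inr ⟨s', h1, t, h2, h3⟩)
    · exact Or.inr ⟨s', h1, t, h2, h3⟩

lemma VL_length : ∀ (L : ℕ) (s : St), ∀ l ∈ VL L s, l.length = L := by
  intro L
  induction L with
  | zero => intro s l hl; unfold VL at hl; split at hl <;> simp_all
  | succ L ih =>
    intro s l hl
    rw [mem_VL_succ] at hl
    obtain ⟨x, s', t, _, h2, rfl⟩ := hl
    simp [ih s' t h2]



lemma head?_mem_step {s : St} {x : ℕ} {F : St → Finset (List ℕ)} {l : List ℕ}
    (h : l ∈ step s x F) : l.head? = some x := by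
  rw [mem_step] at h
  obtain ⟨s', _, t, _, rfl⟩ := h
  rfl

lemma step_card (L : ℕ) (s s' : St) (x M : ℕ) (h : nxt s x = some s')
    (hLB : ∀ l ∈ VL L s', mv s' L ≤ l.sum)
    (hC : ((VL L s').filter (fun l => l.sum = mv s' L)).card = cv s' L)
    (hM : M ≤ x + mv s' L) :
    ((step s x (VL L)).filter (fun l => l.sum = M)).card
      = if x + mv s' L = M then cv s' L else 0 := by
  unfold step
  rw [h]
  rw [Finset.filter_image]
  rw [Finset.card_image_of_injective _ (List.cons_injective)]
  split
  · next heq =>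
    rw [← hC]
    congr 1
    apply Finset.filter_congr
    intro t ht
    simp only [List.sum_cons]
    constructor
    · intro h2; omega
    · intro h2; simp [h2, heq]
  · next hne =>
    rw [Finset.card_eq_zero, Finset.filter_eq_empty_iff]
    intro t ht hsum
    simp only [List.sum_cons] at hsum
    have := hLB t ht
    omega

lemma step_card_none (s : St) (x : ℕ) (F : St → Finset (List ℕ)) (M : ℕ)
    (h : nxt s x = none) :
    ((step s x F).filter (fun l => l.sum = M)).card = 0 := by
  unfold step
  rw [h]
  simp

lemma disj_step {x y : ℕ} {A B : Finset (List ℕ)}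
    (hA : ∀ l ∈ A, l.head? = some x) (hB : ∀ l ∈ B, l.head? = some y) (hxy : x ≠ y) :
    Disjoint A B := by
  rw [Finset.disjoint_left]
  intro l hl hl'
  have := hA l hl
  have := hB l hl'
  simp_all

lemma main : ∀ (L : ℕ) (s : St), (∀ l ∈ VL L s, mv s L ≤ l.sum) ∧
    ((VL L s).filter (fun l => l.sum = mv s L)).card = cv s L := by
  intro L
  induction L with
  | zero =>
    intro s
    cases s <;> simp [VL, mv, cv, tri, Finset.filter_singleton]
  | succ L ih =>
    intro s
    have LB : ∀ l ∈ VL (L+1) s, mv s (L+1) ≤ l.sum := by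
      intro l hl
      rw [mem_VL_succ] at hl
      obtain ⟨x, s', t, h1, h2, rfl⟩ := hl
      have ht := (ih s').1 t h2
      simp only [List.sum_cons]
      have hx : x = 0 ∨ x = 1 ∨ x = 2 := by
        by_contra hc
        push_neg at hc
        obtain ⟨x, rfl⟩ : ∃ y, x = y + 3 := ⟨x - 3, by omega⟩
        rw [nxt_ge3] at h1
        exact absurd h1 (by simp)
      rcases hx with rfl | rfl | rfl <;> cases s <;>
        simp only [nxt, Option.some.injEq] at h1 <;>
        first
        | (subst h1; simp only [mv] at ht ⊢; (try split_ifs at ht ⊢) <;> omega)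
        | (exact absurd h1 (by simp))
    refine ⟨LB, ?_⟩
    have dd : ∀ x y : ℕ, x ≠ y →
        Disjoint ((step s x (VL L)).filter (fun l => l.sum = mv s (L+1)))
          ((step s y (VL L)).filter (fun l => l.sum = mv s (L+1))) := by
      intro x y hxy
      exact disj_step (fun l hl => head?_mem_step (Finset.mem_filter.mp hl).1)
        (fun l hl => head?_mem_step (Finset.mem_filter.mp hl).1) hxy
    have key : VL (L+1) s = step s 0 (VL L) ∪ step s 1 (VL L) ∪ step s 2 (VL L) := rfl
    rw [key, Finset.filter_union, Finset.filter_union]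
    rw [Finset.card_union_of_disjoint
      (Finset.disjoint_union_left.mpr ⟨dd 0 2 (by norm_num), dd 1 2 (by norm_num)⟩)]
    rw [Finset.card_union_of_disjoint (dd 0 1 (by norm_num))]
    cases s
    case needy =>
      rw [step_card_none .needy 0 _ _ rfl, step_card_none .needy 1 _ _ rfl,
          step_card L .needy .after2 2 _ rfl (ih _).1 (ih _).2
            (by simp only [mv]; split_ifs <;> omega)]
      obtain ⟨q, r, hr3, rfl⟩ : ∃ q r, r < 3 ∧ L = 3*q + r := ⟨L/3, L%3, by omega, by omega⟩
      interval_cases r <;>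
      · simp only [mv, cv,
          show (3*q:ℕ)/3 = q by omega, show (3*q+0:ℕ)/3 = q by omega,
          show (3*q+1:ℕ)/3 = q by omega, show (3*q+2:ℕ)/3 = q by omega,
          show (3*q+3:ℕ)/3 = q+1 by omega, show (3*q+0+1:ℕ)/3 = q by omega,
          show (3*q+1+1:ℕ)/3 = q by omega, show (3*q+2+1:ℕ)/3 = q+1 by omega,
          show (3*q:ℕ)%3 = 0 by omega, show (3*q+0:ℕ)%3 = 0 by omega,
          show (3*q+1:ℕ)%3 = 1 by omega, show (3*q+2:ℕ)%3 = 2 by omega,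
          show (3*q+0+1:ℕ)%3 = 1 by omega, show (3*q+1+1:ℕ)%3 = 2 by omega,
          show (3*q+2+1:ℕ)%3 = 0 by omega,
          show tri (q+1) = tri q + q + 2 from rfl]
        try norm_num
        all_goals first
        | omega
        | (generalize tri q = A; omega)
        | (split_ifs <;> first | omega | (generalize tri q = A; omega))
    case free =>
      rw [step_card L .free .needy 0 _ rfl (ih _).1 (ih _).2
            (by simp only [mv]; (try split_ifs) <;> omega),
          step_card L .free .free 1 _ rfl (ih _).1 (ih _).2
            (by simp only [mv]; (try split_ifs) <;> omega),
          step_card L .free .after2 2 _ rfl (ih _).1 (ih _).2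
            (by simp only [mv]; (try split_ifs) <;> omega)]
      obtain ⟨q, r, hr3, rfl⟩ : ∃ q r, r < 3 ∧ L = 3*q + r := ⟨L/3, L%3, by omega, by omega⟩
      interval_cases r <;>
      · simp only [mv, cv,
          show (3*q:ℕ)/3 = q by omega, show (3*q+0:ℕ)/3 = q by omega,
          show (3*q+1:ℕ)/3 = q by omega, show (3*q+2:ℕ)/3 = q by omega,
          show (3*q+3:ℕ)/3 = q+1 by omega, show (3*q+0+1:ℕ)/3 = q by omega,
          show (3*q+1+1:ℕ)/3 = q by omega, show (3*q+2+1:ℕ)/3 = q+1 by omega,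
          show (3*q:ℕ)%3 = 0 by omega, show (3*q+0:ℕ)%3 = 0 by omega,
          show (3*q+1:ℕ)%3 = 1 by omega, show (3*q+2:ℕ)%3 = 2 by omega,
          show (3*q+0+1:ℕ)%3 = 1 by omega, show (3*q+1+1:ℕ)%3 = 2 by omega,
          show (3*q+2+1:ℕ)%3 = 0 by omega,
          show tri (q+1) = tri q + q + 2 from rfl]
        try norm_num
        all_goals first
        | omega
        | (generalize tri q = A; omega)
        | (split_ifs <;> first | omega | (generalize tri q = A; omega))
    case after2 =>
      rw [step_card L .after2 .free 0 _ rfl (ih _).1 (ih _).2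
            (by simp only [mv]; (try split_ifs) <;> omega),
          step_card L .after2 .free 1 _ rfl (ih _).1 (ih _).2
            (by simp only [mv]; (try split_ifs) <;> omega),
          step_card L .after2 .after2 2 _ rfl (ih _).1 (ih _).2
            (by simp only [mv]; (try split_ifs) <;> omega)]
      obtain ⟨q, r, hr3, rfl⟩ : ∃ q r, r < 3 ∧ L = 3*q + r := ⟨L/3, L%3, by omega, by omega⟩
      interval_cases r <;>
      · simp only [mv, cv,
          show (3*q:ℕ)/3 = q by omega, show (3*q+0:ℕ)/3 = q by omega,
          show (3*q+1:ℕ)/3 = q by omega, show (3*q+2:ℕ)/3 = q by omega,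
          show (3*q+3:ℕ)/3 = q+1 by omega, show (3*q+0+1:ℕ)/3 = q by omega,
          show (3*q+1+1:ℕ)/3 = q by omega, show (3*q+2+1:ℕ)/3 = q+1 by omega,
          show (3*q:ℕ)%3 = 0 by omega, show (3*q+0:ℕ)%3 = 0 by omega,
          show (3*q+1:ℕ)%3 = 1 by omega, show (3*q+2:ℕ)%3 = 2 by omega,
          show (3*q+0+1:ℕ)%3 = 1 by omega, show (3*q+1+1:ℕ)%3 = 2 by omega,
          show (3*q+2+1:ℕ)%3 = 0 by omega,
          show tri (q+1) = tri q + q + 2 from rfl]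
        try norm_num
        all_goals first
        | omega
        | (generalize tri q = A; omega)
        | (split_ifs <;> first | omega | (generalize tri q = A; omega))

def domOK (s : St) (l : List ℕ) : Prop :=
  ∀ i : ℕ, l.getD i 3 = 0 →
    (i = 0 ∧ s = .after2) ∨ (1 ≤ i ∧ l.getD (i-1) 3 = 2) ∨ l.getD (i+1) 3 = 2

def Cond (s : St) (l : List ℕ) : Prop :=
  (∀ x ∈ l, x ≤ 2) ∧ (s = .needy → l.head? = some 2) ∧ domOK s l

lemma domOK_state {s s' : St} (hs : s ≠ .after2) (hs' : s' ≠ .after2) {l : List ℕ} :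
    domOK s l ↔ domOK s' l := by
  unfold domOK
  constructor <;> (intro h i hi; rcases h i hi with ⟨_, h2⟩ | h | h) <;> simp_all

lemma getD_zero_head {t : List ℕ} : t.getD 0 3 = 2 ↔ t.head? = some 2 := by
  cases t <;> simp [List.getD]

lemma domOK_cons (s : St) (x : ℕ) (t : List ℕ) :
    domOK s (x :: t) ↔
      ((x = 0 → (s = .after2 ∨ t.getD 0 3 = 2)) ∧
        domOK (if x = 2 then .after2 else .free) t) := by
  constructor
  · intro h
    constructor
    · intro hx
      rcases h 0 (by simpa [hx]) with ⟨_, h2⟩ | ⟨h1, _⟩ | h2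
      · exact Or.inl h2
      · omega
      · exact Or.inr (by simpa using h2)
    · intro i hi
      rcases h (i+1) (by simpa using hi) with ⟨h1, _⟩ | ⟨h1, h2⟩ | h2
      · omega
      · rcases Nat.eq_zero_or_pos i with rfl | hpos
        · simp only [Nat.add_sub_cancel, List.getD_cons_zero] at h2
          subst h2
          simp
        · right; left
          refine ⟨hpos, ?_⟩
          have : i + 1 - 1 = (i - 1) + 1 := by omega
          rw [this] at h2
          simpa using h2
      · right; right; simpa using h2
  · rintro ⟨h0, h⟩ i hi
    match i with
    | 0 =>
      simp only [List.getD_cons_zero] at hi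
      rcases h0 hi with h1 | h1
      · exact Or.inl ⟨rfl, h1⟩
      · right; right; simpa using h1
    | (j+1) =>
      simp only [List.getD_cons_succ] at hi
      rcases h j hi with ⟨rfl, hst⟩ | ⟨h1, h2⟩ | h2
      · right; left
        refine ⟨by omega, ?_⟩
        simp only [Nat.add_sub_cancel, List.getD_cons_zero]
        split at hst <;> simp_all
      · right; left
        refine ⟨by omega, ?_⟩
        have : j + 1 - 1 = (j - 1) + 1 := by omega
        rw [this]
        simpa using h2
      · right; right; simpa using h2

lemma cond_iff : ∀ (l : List ℕ) (s : St), l ∈ VL l.length s ↔ Cond s l := by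
  intro l
  induction l with
  | nil =>
    intro s
    unfold VL Cond domOK
    cases s <;> simp [List.getD]
  | cons x t ih =>
    intro s
    have hmem : (x :: t) ∈ VL (x :: t).length s ↔
        ∃ s', nxt s x = some s' ∧ Cond s' t := by
      simp only [List.length_cons]
      rw [mem_VL_succ]
      constructor
      · rintro ⟨x', s', t', h1, h2, h3⟩
        obtain ⟨rfl, rfl⟩ : x' = x ∧ t' = t := by
          constructor <;> [exact (List.cons.injEq .. ▸ h3).1.symm; exact (List.cons.injEq .. ▸ h3).2.symm]
        exact ⟨s', h1, (ih s').mp h2⟩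
      · rintro ⟨s', h1, h2⟩
        exact ⟨x, s', t, h1, (ih s').mpr h2, rfl⟩
    rw [hmem]
    have hx4 : x = 0 ∨ x = 1 ∨ x = 2 ∨ 3 ≤ x := by omega
    rcases hx4 with rfl | rfl | rfl | hx
    · -- x = 0
      cases s
      case needy =>
        constructor
        · rintro ⟨s', h1, _⟩; exact absurd h1 (by simp [nxt])
        · rintro ⟨_, h2, _⟩; simp at h2
      case free =>
        constructor
        · rintro ⟨s', h1, hb, hh, hd⟩
          obtain rfl : s' = St.needy := by simpa [nxt] using h1.symm
          refine ⟨List.forall_mem_cons.mpr ⟨by omega, hb⟩, by simp, ?_⟩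
          rw [domOK_cons]
          refine ⟨fun _ => Or.inr (getD_zero_head.mpr (hh rfl)), ?_⟩
          simp only [if_neg (by norm_num : (0:ℕ) ≠ 2)]
          exact (domOK_state (by simp) (by simp)).mpr hd
        · rintro ⟨hb, _, hd⟩
          rw [domOK_cons] at hd
          obtain ⟨h0, hd⟩ := hd
          refine ⟨.needy, by simp [nxt], fun y hy => hb y (by simp [hy]), ?_, ?_⟩
          · intro _
            rcases h0 rfl with h | h
            · simp at h
            · exact getD_zero_head.mp h
          · simp only [if_neg (by norm_num : (0:ℕ) ≠ 2)] at hd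
            exact (domOK_state (by simp) (by simp)).mp hd
      case after2 =>
        constructor
        · rintro ⟨s', h1, hb, hh, hd⟩
          obtain rfl : s' = St.free := by simpa [nxt] using h1.symm
          refine ⟨List.forall_mem_cons.mpr ⟨by omega, hb⟩, by simp, ?_⟩
          rw [domOK_cons]
          exact ⟨fun _ => Or.inl rfl,
            by simpa only [if_neg (by norm_num : (0:ℕ) ≠ 2)] using hd⟩
        · rintro ⟨hb, _, hd⟩
          rw [domOK_cons] at hd
          refine ⟨.free, by simp [nxt], fun y hy => hb y (by simp [hy]), by simp, ?_⟩
          simpa only [if_neg (by norm_num : (0:ℕ) ≠ 2)] using hd.2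
    · -- x = 1
      cases s
      case needy =>
        constructor
        · rintro ⟨s', h1, _⟩; exact absurd h1 (by simp [nxt])
        · rintro ⟨_, h2, _⟩; simp at h2
      all_goals {
        constructor
        · rintro ⟨s', h1, hb, hh, hd⟩
          obtain rfl : s' = St.free := by simpa [nxt] using h1.symm
          refine ⟨List.forall_mem_cons.mpr ⟨by omega, hb⟩, by simp, ?_⟩
          rw [domOK_cons]
          exact ⟨by omega,
            by simpa only [if_neg (by norm_num : (1:ℕ) ≠ 2)] using hd⟩
        · rintro ⟨hb, _, hd⟩
          rw [domOK_cons] at hd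
          refine ⟨.free, by simp [nxt], fun y hy => hb y (by simp [hy]), by simp, ?_⟩
          simpa only [if_neg (by norm_num : (1:ℕ) ≠ 2)] using hd.2
      }
    · -- x = 2
      cases s <;>
      { constructor
        · rintro ⟨s', h1, hb, hh, hd⟩
          obtain rfl : s' = St.after2 := by simpa [nxt] using h1.symm
          refine ⟨List.forall_mem_cons.mpr ⟨by omega, hb⟩, by simp, ?_⟩
          rw [domOK_cons]
          exact ⟨by omega, by simpa only [if_pos rfl, ↓reduceIte] using hd⟩
        · rintro ⟨hb, _, hd⟩
          rw [domOK_cons] at hd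
          refine ⟨.after2, by simp [nxt], fun y hy => hb y (by simp [hy]), by simp, ?_⟩
          simpa only [if_pos rfl, ↓reduceIte] using hd.2 }
    · -- x ≥ 3
      obtain ⟨y, rfl⟩ : ∃ y, x = y + 3 := ⟨x - 3, by omega⟩
      constructor
      · rintro ⟨s', h1, _⟩
        rw [nxt_ge3] at h1
        exact absurd h1 (by simp)
      · rintro ⟨hb, _, _⟩
        have := hb (y+3) (by simp)
        omega

lemma getD_ofFn {n : ℕ} (f : Fin n → ℕ) (i : ℕ) :
    (List.ofFn f).getD i 3 = if h : i < n then f ⟨i, h⟩ else 3 := by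
  split
  · next h =>
    rw [List.getD_eq_getElem _ _ (by simpa using h)]
    simp
  · next h =>
    exact List.getD_eq_default _ _ (by simpa using (by omega : n ≤ i))

lemma isRDF_iff {n : ℕ} (f : Fin n → ℕ) :
    IsRDF (SimpleGraph.pathGraph n) f ↔ Cond .free (List.ofFn f) := by
  unfold IsRDF Cond
  constructor
  · rintro ⟨h1, h2⟩
    refine ⟨?_, by simp, ?_⟩
    · intro x hx
      obtain ⟨i, rfl⟩ := List.mem_ofFn.mp hx
      exact h1 i
    · intro i hi
      rw [getD_ofFn] at hi
      split at hi
      case isTrue h =>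
        obtain ⟨u, hadj, hu⟩ := h2 ⟨i, h⟩ hi
        rw [SimpleGraph.pathGraph_adj] at hadj
        rw [show ((⟨i, h⟩ : Fin n) : ℕ) = i from rfl] at hadj
        have hult := u.isLt
        rcases hadj with ha | ha
        · right; right
          rw [getD_ofFn]
          rw [dif_pos (show i + 1 < n by omega)]
          have : (⟨i+1, by omega⟩ : Fin n) = u := Fin.ext (by simpa using ha)
          rw [this]; exact hu
        · right; left
          refine ⟨by omega, ?_⟩
          rw [getD_ofFn, dif_pos (show i - 1 < n by omega)]
          have : (⟨i-1, by omega⟩ : Fin n) = u := Fin.ext (by simp at ha ⊢; omega)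
          rw [this]; exact hu
      case isFalse => exact absurd hi (by norm_num)
  · rintro ⟨h1, _, h3⟩
    constructor
    · intro v
      exact h1 (f v) (List.mem_ofFn.mpr ⟨v, rfl⟩)
    · intro v hv
      have hv' : (List.ofFn f).getD v.val 3 = 0 := by
        rw [getD_ofFn, dif_pos v.isLt]
        simpa using hv
      rcases h3 v.val hv' with ⟨_, hF⟩ | ⟨hge, hc⟩ | hc
      · exact absurd hF (by simp)
      · rw [getD_ofFn] at hc
        split at hc
        case isTrue h =>
          exact ⟨⟨v.val - 1, h⟩, SimpleGraph.pathGraph_adj.mpr (Or.inr (by simp; omega)), hc⟩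
        case isFalse => exact absurd hc (by norm_num)
      · rw [getD_ofFn] at hc
        split at hc
        case isTrue h =>
          exact ⟨⟨v.val + 1, h⟩, SimpleGraph.pathGraph_adj.mpr (Or.inl (by simp)), hc⟩
        case isFalse => exact absurd hc (by norm_num)

lemma tri_pos : ∀ t, 0 < tri t := by
  intro t; cases t <;> simp [tri]

lemma cv_free_pos (n : ℕ) : 0 < cv .free n := by
  rcases (show n%3=0 ∨ n%3=1 ∨ n%3=2 by omega) with h|h|h <;> simp [cv, h, tri_pos]

lemma mem_VL_iff_ofFn {n : ℕ} (f : Fin n → ℕ) :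
    List.ofFn f ∈ VL n .free ↔ Cond .free (List.ofFn f) := by
  have := cond_iff (List.ofFn f) .free
  rwa [List.length_ofFn] at this

lemma exists_fun_of_mem {n : ℕ} {l : List ℕ} (hl : l ∈ VL n .free) :
    ∃ f : Fin n → ℕ, List.ofFn f = l := by
  have hlen := VL_length n .free l hl
  subst hlen
  exact ⟨l.get, List.ofFn_get l⟩

lemma gammaR_path (n : ℕ) : gammaR (SimpleGraph.pathGraph n) = mv .free n := by
  have hne : ∃ f : Fin n → ℕ, IsRDF (SimpleGraph.pathGraph n) f ∧ ∑ v, f v = mv .free n := by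
    have hcard := (main n .free).2
    have hpos : 0 < ((VL n .free).filter fun l => l.sum = mv .free n).card := by
      rw [hcard]; exact cv_free_pos n
    obtain ⟨l, hl⟩ := Finset.card_pos.mp hpos
    rw [Finset.mem_filter] at hl
    obtain ⟨f, rfl⟩ := exists_fun_of_mem hl.1
    refine ⟨f, (isRDF_iff f).mpr ((mem_VL_iff_ofFn f).mp hl.1), ?_⟩
    rw [← List.sum_ofFn]
    exact hl.2
  obtain ⟨f0, hf0, hs0⟩ := hne
  unfold gammaR
  apply le_antisymm
  · exact Nat.sInf_le ⟨f0, hf0, hs0⟩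
  · have hne2 : {w | ∃ f, IsRDF (SimpleGraph.pathGraph n) f ∧ ∑ v, f v = w}.Nonempty :=
      ⟨mv St.free n, f0, hf0, hs0⟩
    refine le_csInf hne2 ?_
    rintro w ⟨f, hf, rfl⟩
    have hm := (main n .free).1 (List.ofFn f)
      ((mem_VL_iff_ofFn f).mpr ((isRDF_iff f).mp hf))
    rwa [List.sum_ofFn] at hm

lemma two_tri : ∀ t, 2 * tri t = (t+1)*(t+2) := by
  intro t
  induction t with
  | zero => rfl
  | succ t ih =>
    calc 2 * tri (t+1) = 2 * tri t + 2*t + 4 := by simp [tri]; ring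
    _ = (t+1)*(t+2) + 2*t + 4 := by rw [ih]
    _ = (t+1+1)*(t+1+2) := by ring

end RDFAux

theorem path_minRDF_count_mod_two (n : ℕ) (hn : n % 3 = 2) :
    {f | IsMinRDF (SimpleGraph.pathGraph n) f}.ncard = (n + 4) * (n + 7) / 18 := by
  classical
  have hg := RDFAux.gammaR_path n
  have himg : List.ofFn '' {f : Fin n → ℕ | IsMinRDF (SimpleGraph.pathGraph n) f}
      = ↑((RDFAux.VL n .free).filter fun l => l.sum = RDFAux.mv .free n) := by
    ext l
    simp only [Set.mem_image, Set.mem_setOf_eq, Finset.coe_filter, Set.mem_setOf_eq,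
      IsMinRDF]
    constructor
    · rintro ⟨f, ⟨hf, hsum⟩, rfl⟩
      refine ⟨(RDFAux.mem_VL_iff_ofFn f).mpr ((RDFAux.isRDF_iff f).mp hf), ?_⟩
      rw [List.sum_ofFn, hsum, hg]
    · rintro ⟨h1, h2⟩
      obtain ⟨f, rfl⟩ := RDFAux.exists_fun_of_mem h1
      refine ⟨f, ⟨(RDFAux.isRDF_iff f).mpr ((RDFAux.mem_VL_iff_ofFn f).mp h1), ?_⟩, rfl⟩
      rw [hg, ← List.sum_ofFn]
      exact h2
  have hncard : {f | IsMinRDF (SimpleGraph.pathGraph n) f}.ncard = RDFAux.cv .free n := by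
    rw [← Set.ncard_image_of_injective _ List.ofFn_injective, himg, Set.ncard_coe_finset,
      (RDFAux.main n .free).2]
  rw [hncard]
  obtain ⟨k, rfl⟩ : ∃ k, n = 3*k+2 := ⟨n/3, by omega⟩
  simp only [RDFAux.cv, show (3*k+2)%3 = 2 by omega, show (3*k+2)/3 = k by omega]
  norm_num
  calc RDFAux.tri (k+1) = 18 * RDFAux.tri (k+1) / 18 := by rw [Nat.mul_div_cancel_left _ (by norm_num)]
  _ = (3*k+2+4)*(3*k+2+7) / 18 := by
      congr 1
      calc 18 * RDFAux.tri (k+1) = 9 * (2 * RDFAux.tri (k+1)) := by ring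
      _ = 9 * ((k+1+1)*(k+1+2)) := by rw [RDFAux.two_tri]
      _ = (3*k+2+4)*(3*k+2+7) := by ring
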